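/- In the group of homeomorphisms of ℝ generated by a(t) = t+1, b (piecewise: t for t≤0, t/(1−t) for 0≤t≤1/2, 3−1/t for 1/2≤t≤1, t+1 for t≥1), and c(t) = 2t/(1+t) on [0,1] (identity elsewhere), the element b·c·a⁻¹·c⁻¹·a coincides with t ↦ 2t on the interval [0,1]. -/

import Mathlib

/-- The homeomorphism b of ℝ. -/
noncomputable def bmap (t : ℝ) : ℝ :=
  if t ≤ 0 then t
  else if t ≤ 1/2 then t / (1 - t)
  else if t ≤ 1 then 3 - 1/t
  else t + 1

/-- The homeomorphism c of ℝ: c(t) = 2t/(1+t) on [0,1], identity elsewhere. -/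
noncomputable def cmap (t : ℝ) : ℝ :=
  if 0 ≤ t ∧ t ≤ 1 then 2 * t / (1 + t) else t

lemma cmap_nonpos {s : ℝ} (hs : s ≤ 0) : cmap s = s := by
  unfold cmap
  split_ifs with h
  · have : s = 0 := le_antisymm hs h.1
    simp [this]
  · rfl

/-- the element b·c·a⁻¹·c⁻¹·a (applied left-to-right, with a(t) = t+1)
coincides with t ↦ 2t on [0,1]. -/
theorem bcacainv_is_doubling
    (cinv : ℝ → ℝ) (hc1 : ∀ t, cinv (cmap t) = t) (hc2 : ∀ t, cmap (cinv t) = t) :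
    ∀ t : ℝ, 0 ≤ t → t ≤ 1 → cinv (cmap (bmap t) - 1) + 1 = 2 * t := by
  intro t h0 h1
  rcases le_or_gt t (1/2) with hhalf | hhalf
  · -- cmap (bmap t) = 2t
    have key : cmap (bmap t) = 2 * t := by
      rcases le_or_gt t 0 with ht0 | ht0
      · have : t = 0 := le_antisymm ht0 h0
        subst this
        simp [bmap, cmap]
      · have hb : bmap t = t / (1 - t) := by
          unfold bmap
          rw [if_neg (not_le.2 ht0), if_pos hhalf]
        have h1t : (0:ℝ) < 1 - t := by linarith
        have hcond : 0 ≤ t / (1 - t) ∧ t / (1 - t) ≤ 1 := by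
          constructor
          · positivity
          · rw [div_le_one h1t]; linarith
        rw [hb]
        unfold cmap
        rw [if_pos hcond]
        rw [div_eq_iff (by positivity)]
        field_simp
        ring
    rw [key]
    have : cmap (2 * t - 1) = 2 * t - 1 := cmap_nonpos (by linarith)
    calc cinv (2 * t - 1) + 1 = cinv (cmap (2 * t - 1)) + 1 := by rw [this]
      _ = 2 * t := by rw [hc1]; ring
  · have ht0 : ¬ t ≤ 0 := by norm_num; linarith
    have hb : bmap t = 3 - 1/t := by
      unfold bmap
      rw [if_neg ht0, if_neg (not_le.2 hhalf), if_pos h1]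
    have htpos : (0:ℝ) < t := by linarith
    have hgt1 : 1 < 3 - 1/t := by
      have : 1/t < 2 := by rw [div_lt_iff₀ htpos]; linarith
      linarith
    have hcb : cmap (bmap t) = 3 - 1/t := by
      rw [hb]; unfold cmap
      rw [if_neg (by push_neg; intro _; linarith)]
    have hcond : 0 ≤ 2*t - 1 ∧ 2*t - 1 ≤ 1 := ⟨by linarith, by linarith⟩
    have hkey : cmap (2*t - 1) = 2 - 1/t := by
      unfold cmap
      rw [if_pos hcond]
      field_simp
      ring
    have : cmap (bmap t) - 1 = cmap (2*t - 1) := by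
      rw [hcb, hkey]; ring
    rw [this, hc1]; ring
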